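/- The measure dw is doubling: there is a constant C > 0 such that w(B(x,2r)) ≤ C · w(B(x,r)) for all x ∈ ℝ^N and r > 0. -/

import Mathlib

open scoped RealInnerProductSpace ENNReal
open MeasureTheory Filter Topology

noncomputable section

/-- The reflection `σ_α(x) = x − 2(⟨x,α⟩/‖α‖²)α` in the hyperplane orthogonal to `α`. -/
def dunklReflection {N : ℕ} (α x : EuclideanSpace ℝ (Fin N)) : EuclideanSpace ℝ (Fin N) :=
  x - (2 * ⟪x, α⟫ / ‖α‖ ^ 2) • α

/-- `R` is a normalized root system: `R ∩ ℝα = {α, −α}`, `σ_α(R) = R`, `‖α‖ = √2`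
for every `α ∈ R` (and `0 ∉ R`). -/
def IsNormalizedRootSystem {N : ℕ} (R : Finset (EuclideanSpace ℝ (Fin N))) : Prop :=
  (0 : EuclideanSpace ℝ (Fin N)) ∉ R ∧
  (∀ α ∈ R, ∀ β ∈ R, (∃ c : ℝ, β = c • α) → β = α ∨ β = -α) ∧
  (∀ α ∈ R, -α ∈ R) ∧
  (∀ α ∈ R, dunklReflection α '' (R : Set (EuclideanSpace ℝ (Fin N)))
      = (R : Set (EuclideanSpace ℝ (Fin N)))) ∧
  (∀ α ∈ R, ‖α‖ = Real.sqrt 2)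

/-- The group `G` generated by the reflections `σ_α`, `α ∈ R`, viewed as a subgroup of the
orthogonal group (group of linear isometries) of `ℝ^N`. -/
def reflGroup {N : ℕ} (R : Finset (EuclideanSpace ℝ (Fin N))) :
    Subgroup (EuclideanSpace ℝ (Fin N) ≃ₗᵢ[ℝ] EuclideanSpace ℝ (Fin N)) :=
  Subgroup.closure {g | ∃ α ∈ R, ∀ x, g x = dunklReflection α x}

/-- The orbit distance `d(x,y) = min {‖x − σ(y)‖ : σ ∈ G}`. -/
def orbitDist {N : ℕ} (R : Finset (EuclideanSpace ℝ (Fin N)))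
    (x y : EuclideanSpace ℝ (Fin N)) : ℝ :=
  sInf {r | ∃ σ ∈ reflGroup R, r = ‖x - σ y‖}

/-- `σ_𝛂 = σ_{α_m} ∘ ⋯ ∘ σ_{α_1}` for `𝛂 = (α_1, …, α_m)`. -/
def reflSeq {N : ℕ} : List (EuclideanSpace ℝ (Fin N)) → EuclideanSpace ℝ (Fin N) →
    EuclideanSpace ℝ (Fin N)
  | [], y => y
  | a :: l, y => reflSeq l (dunklReflection a y)

/-- `ρ_𝛂(x,y,t) = ∏_{j=0}^{m−1} (1 + ‖x − σ_{α_j}∘⋯∘σ_{α_1}(y)‖/√t)^{−2}`. -/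
def rhoSeq {N : ℕ} (x : EuclideanSpace ℝ (Fin N)) (t : ℝ) :
    List (EuclideanSpace ℝ (Fin N)) → EuclideanSpace ℝ (Fin N) → ℝ
  | [], _ => 1
  | a :: l, y => ((1 + ‖x - y‖ / Real.sqrt t) ^ 2)⁻¹ * rhoSeq x t l (dunklReflection a y)

/-- `𝛂` is admissible for `(x,y)`: `d(x, σ_𝛂(y)) = ‖x − σ_𝛂(y)‖`. -/
def IsAdmissible {N : ℕ} (R : Finset (EuclideanSpace ℝ (Fin N)))
    (x y : EuclideanSpace ℝ (Fin N)) (l : List (EuclideanSpace ℝ (Fin N))) : Prop :=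
  orbitDist R x (reflSeq l y) = ‖x - reflSeq l y‖

/-- `Λ_B(x,y,t) = Σ_{𝛂 ∈ 𝒜(x,y), ℓ(𝛂) ≤ B} ρ_𝛂(x,y,t)` (a finite sum, written as a `tsum`
over the finite type of admissible sequences of roots of length at most `B`). -/
def LambdaFn {N : ℕ} (R : Finset (EuclideanSpace ℝ (Fin N))) (B : ℕ)
    (x y : EuclideanSpace ℝ (Fin N)) (t : ℝ) : ℝ :=
  ∑' l : {l : List (EuclideanSpace ℝ (Fin N)) //
      (∀ a ∈ l, a ∈ R) ∧ l.length ≤ B ∧ IsAdmissible R x y l},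
    rhoSeq x t l.1 y

/-- The density `w(x) = ∏_{α∈R} |⟨x,α⟩|^{k(α)}`. -/
def wDensity {N : ℕ} (R : Finset (EuclideanSpace ℝ (Fin N)))
    (k : EuclideanSpace ℝ (Fin N) → ℝ) (x : EuclideanSpace ℝ (Fin N)) : ℝ :=
  ∏ α ∈ R, |⟪x, α⟫| ^ (k α)

/-- The measure `dw(x) = w(x) dx`. -/
def wMeasure {N : ℕ} (R : Finset (EuclideanSpace ℝ (Fin N)))
    (k : EuclideanSpace ℝ (Fin N) → ℝ) : Measure (EuclideanSpace ℝ (Fin N)) :=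
  volume.withDensity fun x => ENNReal.ofReal (wDensity R k x)

private lemma abs_add_same_sign {a b : ℝ} (h : 0 ≤ a * b) : |a + b| = |a| + |b| := by
  rcases le_or_gt 0 a with ha | ha <;> rcases le_or_gt 0 b with hb | hb
  · rw [abs_of_nonneg ha, abs_of_nonneg hb, abs_of_nonneg (by linarith)]
  · have ha0 : a = 0 := by nlinarith
    subst ha0; simp
  · have hb0 : b = 0 := by nlinarith
    subst hb0; simp
  · rw [abs_of_nonpos ha.le, abs_of_nonpos hb.le, abs_of_nonpos (by linarith)]; ring

private lemma exists_generic {N : ℕ} (hN : 1 ≤ N) (R : Finset (EuclideanSpace ℝ (Fin N)))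
    (hR0 : (0 : EuclideanSpace ℝ (Fin N)) ∉ R) :
    ∃ u : EuclideanSpace ℝ (Fin N), ‖u‖ = 1 ∧ ∀ α ∈ R, ⟪u, α⟫ ≠ 0 := by
  rcases R.eq_empty_or_nonempty with hRe | ⟨α₀, hα₀⟩
  · refine ⟨EuclideanSpace.single ⟨0, hN⟩ (1:ℝ), ?_, by simp [hRe]⟩
    simp [EuclideanSpace.norm_single]
  · -- the union of the hyperplanes has measure zero
    have hni : ∀ α ∈ R, volume {v : EuclideanSpace ℝ (Fin N) | ⟪v, α⟫ = 0} = 0 := by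
      intro α hα
      have hα0 : α ≠ 0 := fun h => hR0 (h ▸ hα)
      have h : {v : EuclideanSpace ℝ (Fin N) | ⟪v, α⟫ = 0}
          = ((ℝ ∙ α)ᗮ : Submodule ℝ _) := by
        ext v; simp [Submodule.mem_orthogonal_singleton_iff_inner_left]
      rw [h]
      refine MeasureTheory.Measure.addHaar_submodule _ _ ?_
      intro htop
      have : α ∈ ((ℝ ∙ α)ᗮ : Submodule ℝ _) := htop ▸ Submodule.mem_top
      rw [Submodule.mem_orthogonal_singleton_iff_inner_right] at this
      exact hα0 (inner_self_eq_zero.mp this)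
    have hU : volume (⋃ α ∈ R, {v : EuclideanSpace ℝ (Fin N) | ⟪v, α⟫ = 0}) = 0 := by
      refine measure_biUnion_null_iff ?_ |>.mpr hni
      exact R.countable_toSet
    have hne : ∃ v : EuclideanSpace ℝ (Fin N),
        v ∉ ⋃ α ∈ R, {v : EuclideanSpace ℝ (Fin N) | ⟪v, α⟫ = 0} := by
      by_contra h
      push_neg at h
      have : (Set.univ : Set (EuclideanSpace ℝ (Fin N)))
          ⊆ ⋃ α ∈ R, {v : EuclideanSpace ℝ (Fin N) | ⟪v, α⟫ = 0} := fun v _ => h v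
      have h1 : volume (Set.univ : Set (EuclideanSpace ℝ (Fin N))) = 0 :=
        measure_mono_null this hU
      have h2 : (0:ℝ≥0∞) < volume (Metric.ball (0 : EuclideanSpace ℝ (Fin N)) 1) :=
        Metric.measure_ball_pos _ _ one_pos
      exact absurd (measure_mono_null (Set.subset_univ _) h1) h2.ne'
    obtain ⟨v₀, hv₀⟩ := hne
    simp only [Set.mem_iUnion, Set.mem_setOf_eq, not_exists] at hv₀
    have hv₀ne : ∀ α ∈ R, ⟪v₀, α⟫ ≠ 0 := fun α hα => by
      intro h; exact hv₀ α hα h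
    have hv₀0 : v₀ ≠ 0 := by
      intro h; exact hv₀ne α₀ hα₀ (by simp [h])
    refine ⟨‖v₀‖⁻¹ • v₀, ?_, ?_⟩
    · rw [norm_smul, norm_inv, norm_norm, inv_mul_cancel₀ (norm_ne_zero_iff.mpr hv₀0)]
    · intro α hα
      rw [real_inner_smul_left]
      exact mul_ne_zero (inv_ne_zero (norm_ne_zero_iff.mpr hv₀0)) (hv₀ne α hα)

private lemma exists_good_dir {N : ℕ} (hN : 1 ≤ N) (R : Finset (EuclideanSpace ℝ (Fin N)))
    (hR0 : (0 : EuclideanSpace ℝ (Fin N)) ∉ R)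
    (hRneg : ∀ α ∈ R, -α ∈ R) :
    ∃ c₀ : ℝ, 0 < c₀ ∧ c₀ ≤ 1 ∧ ∀ x : EuclideanSpace ℝ (Fin N), ∃ v,
      ‖v‖ = 1 ∧ (∀ α ∈ R, c₀ ≤ |⟪v, α⟫|) ∧ (∀ α ∈ R, 0 ≤ ⟪x, α⟫ * ⟪v, α⟫) := by
  classical
  obtain ⟨u, hu1, hune⟩ := exists_generic hN R hR0
  -- "good for S" : unit vector, nonzero on all roots, positive on S
  let Good : Finset (EuclideanSpace ℝ (Fin N)) → EuclideanSpace ℝ (Fin N) → Prop := fun S v =>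
    ‖v‖ = 1 ∧ (∀ α ∈ R, ⟪v, α⟫ ≠ 0) ∧ ∀ α ∈ S, 0 < ⟪v, α⟫
  let m : EuclideanSpace ℝ (Fin N) → ℝ := fun v => (insert (1:ℝ) (R.image fun α => |⟪v, α⟫|)).min' (Finset.insert_nonempty _ _)
  have hm_le : ∀ v, ∀ α ∈ R, m v ≤ |⟪v, α⟫| := by
    intro v α hα
    exact Finset.min'_le _ _ (Finset.mem_insert_of_mem (Finset.mem_image_of_mem _ hα))
  have hm_le_one : ∀ v, m v ≤ 1 := fun v => Finset.min'_le _ _ (Finset.mem_insert_self _ _)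
  have hm_pos : ∀ v, (∀ α ∈ R, ⟪v, α⟫ ≠ 0) → 0 < m v := by
    intro v hv
    rw [Finset.lt_min'_iff]
    intro y hy
    rcases Finset.mem_insert.mp hy with rfl | hy
    · norm_num
    · obtain ⟨α, hα, rfl⟩ := Finset.mem_image.mp hy
      exact abs_pos.mpr (hv α hα)
  let f : Finset (EuclideanSpace ℝ (Fin N)) → ℝ := fun S => if h : ∃ v, Good S v then m h.choose else 1
  have hf_pos : ∀ S, 0 < f S := by
    intro S
    by_cases h : ∃ v, Good S v
    · simp only [f, dif_pos h]
      exact hm_pos _ h.choose_spec.2.1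
    · simp only [f, dif_neg h]; norm_num
  refine ⟨(insert (1:ℝ) (R.powerset.image f)).min' (Finset.insert_nonempty _ _), ?_, ?_, ?_⟩
  · rw [Finset.lt_min'_iff]
    intro y hy
    rcases Finset.mem_insert.mp hy with rfl | hy
    · norm_num
    · obtain ⟨S, _, rfl⟩ := Finset.mem_image.mp hy
      exact hf_pos S
  · exact Finset.min'_le _ _ (Finset.mem_insert_self _ _)
  · intro x
    set S : Finset (EuclideanSpace ℝ (Fin N)) := R.filter (fun α => 0 < ⟪x, α⟫) with hS
    have hSR : S ⊆ R := Finset.filter_subset _ _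
    -- existence of a good vector for S, by perturbing x in direction u
    have hex : ∃ v, Good S v := by
      rcases R.eq_empty_or_nonempty with hRe | ⟨α₀, hα₀⟩
      · exact ⟨u, hu1, fun α hα => absurd hα (by simp [hRe]),
          fun α hα => absurd (hSR hα) (by simp [hRe])⟩
      · set Bad : Finset ℝ := R.image fun α => -⟪x, α⟫ / ⟪u, α⟫ with hBad
        set δ : ℝ := (insert (1:ℝ) (S.image fun α => ⟪x, α⟫ / (2 * ‖α‖))).min'
          (Finset.insert_nonempty _ _) with hδ
        have hδpos : 0 < δ := by
          rw [hδ, Finset.lt_min'_iff]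
          intro y hy
          rcases Finset.mem_insert.mp hy with rfl | hy
          · norm_num
          · obtain ⟨α, hα, rfl⟩ := Finset.mem_image.mp hy
            have h1 : 0 < ⟪x, α⟫ := (Finset.mem_filter.mp hα).2
            have h2 : (0:ℝ) < ‖α‖ :=
              norm_pos_iff.mpr (fun h => hR0 (h ▸ hSR hα))
            positivity
        obtain ⟨ε, hεI, hεB⟩ := (Set.Ioo_infinite hδpos).exists_notMem_finset Bad
        obtain ⟨hε0, hεδ⟩ := hεI
        set x' : EuclideanSpace ℝ (Fin N) := x + ε • u with hx'
        have hinner : ∀ α : EuclideanSpace ℝ (Fin N), ⟪x', α⟫ = ⟪x, α⟫ + ε * ⟪u, α⟫ := fun α => by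
          rw [hx', inner_add_left, real_inner_smul_left]
        have hx'ne : ∀ α ∈ R, ⟪x', α⟫ ≠ 0 := by
          intro α hα h
          rw [hinner] at h
          apply hεB
          rw [hBad]
          refine Finset.mem_image.mpr ⟨α, hα, ?_⟩
          have hu0 := hune α hα
          rw [div_eq_iff hu0]
          linarith
        have hx'pos : ∀ α ∈ S, 0 < ⟪x', α⟫ := by
          intro α hα
          have h1 : 0 < ⟪x, α⟫ := (Finset.mem_filter.mp hα).2
          have h2 : (0:ℝ) < ‖α‖ := norm_pos_iff.mpr (fun h => hR0 (h ▸ hSR hα))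
          have h3 : δ ≤ ⟪x, α⟫ / (2 * ‖α‖) :=
            Finset.min'_le _ _ (Finset.mem_insert_of_mem (Finset.mem_image_of_mem _ hα))
          have h4 : |⟪u, α⟫| ≤ ‖α‖ := by
            have := abs_real_inner_le_norm u α
            rwa [hu1, one_mul] at this
          have h5 : ε * ‖α‖ < ⟪x, α⟫ / 2 := by
            have : ε < ⟪x, α⟫ / (2 * ‖α‖) := lt_of_lt_of_le hεδ h3
            calc ε * ‖α‖ < (⟪x, α⟫ / (2 * ‖α‖)) * ‖α‖ := by
                  exact mul_lt_mul_of_pos_right this h2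
              _ = ⟪x, α⟫ / 2 := by field_simp
          have h6 : -(ε * ‖α‖) ≤ ε * ⟪u, α⟫ := by
            have := neg_abs_le ⟪u, α⟫
            nlinarith [abs_nonneg ⟪u, α⟫]
          rw [hinner]
          nlinarith
        have hx'0 : x' ≠ 0 := by
          intro h
          exact hx'ne α₀ hα₀ (by rw [h, inner_zero_left])
        have hn : (0:ℝ) < ‖x'‖ := norm_pos_iff.mpr hx'0
        refine ⟨‖x'‖⁻¹ • x', ?_, ?_, ?_⟩
        · rw [norm_smul, norm_inv, norm_norm, inv_mul_cancel₀ hn.ne']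
        · intro α hα
          rw [real_inner_smul_left]
          exact mul_ne_zero (inv_ne_zero hn.ne') (hx'ne α hα)
        · intro α hα
          rw [real_inner_smul_left]
          exact mul_pos (inv_pos.mpr hn) (hx'pos α hα)
    refine ⟨hex.choose, hex.choose_spec.1, ?_, ?_⟩
    · intro α hα
      have h1 : (insert (1:ℝ) (R.powerset.image f)).min' (Finset.insert_nonempty _ _) ≤ f S :=
        Finset.min'_le _ _ (Finset.mem_insert_of_mem
          (Finset.mem_image_of_mem _ (Finset.mem_powerset.mpr hSR)))
      have h2 : f S = m hex.choose := dif_pos hex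
      exact le_trans (h2 ▸ h1) (hm_le _ α hα)
    · intro α hα
      rcases lt_trichotomy (⟪x, α⟫ : ℝ) 0 with hneg | hzero | hpos
      · have hmem : -α ∈ S := by
          rw [hS, Finset.mem_filter]
          exact ⟨hRneg α hα, by rw [inner_neg_right]; linarith⟩
        have := hex.choose_spec.2.2 _ hmem
        rw [inner_neg_right] at this
        nlinarith
      · rw [hzero, zero_mul]
      · have hmem : α ∈ S := by rw [hS, Finset.mem_filter]; exact ⟨hα, hpos⟩
        have := hex.choose_spec.2.2 _ hmem
        positivity

set_option maxHeartbeats 2000000 in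
/-- The measure `dw` is doubling. -/
theorem wMeasure_doubling {N : ℕ} (hN : 1 ≤ N)
    (R : Finset (EuclideanSpace ℝ (Fin N))) (hR : IsNormalizedRootSystem R)
    (k : EuclideanSpace ℝ (Fin N) → ℝ) (hk : ∀ α ∈ R, 0 < k α)
    (hkG : ∀ σ ∈ reflGroup R, ∀ α ∈ R, k (σ α) = k α) :
    ∃ C : ℝ, 0 < C ∧ ∀ (x : EuclideanSpace ℝ (Fin N)) (r : ℝ), 0 < r →
      wMeasure R k (Metric.closedBall x (2 * r)) ≤
        ENNReal.ofReal C * wMeasure R k (Metric.closedBall x r) := by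
  classical
  obtain ⟨hR0, -, hRneg, -, hRnorm⟩ := hR
  obtain ⟨c₀, hc₀, hc₀1, hdir⟩ := exists_good_dir hN R hR0 hRneg
  set sq2 := Real.sqrt 2 with hsq2
  have hsq2_pos : 0 < sq2 := Real.sqrt_pos.mpr (by norm_num)
  have hsq2_one : 1 ≤ sq2 := by
    rw [hsq2, show (1:ℝ) = Real.sqrt 1 by simp]
    exact Real.sqrt_le_sqrt (by norm_num)
  set ρ₀ : ℝ := c₀ / (4 * sq2) with hρ₀def
  have hρ₀ : 0 < ρ₀ := by positivity
  have hρ₀half : ρ₀ ≤ 1/2 := by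
    rw [hρ₀def, div_le_iff₀ (by positivity)]
    nlinarith
  have hρ₀sq2 : ρ₀ * sq2 = c₀ / 4 := by
    rw [hρ₀def]
    field_simp
  set Cup := ∏ α ∈ R, (2*sq2) ^ (k α) with hCupdef
  set Clow := ∏ α ∈ R, (c₀/4) ^ (k α) with hClowdef
  have hCup : 0 < Cup := Finset.prod_pos fun α _ => Real.rpow_pos_of_pos (by positivity) _
  have hClow : 0 < Clow := Finset.prod_pos fun α _ => Real.rpow_pos_of_pos (by positivity) _
  -- measurability of the density
  have hmeas : Measurable fun y : EuclideanSpace ℝ (Fin N) => ENNReal.ofReal (wDensity R k y) := by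
    apply Measurable.ennreal_ofReal
    refine Finset.measurable_prod R (fun α hα => ?_)
    exact ((continuous_id.inner continuous_const).abs.rpow_const
      fun y => Or.inr (hk α hα).le).measurable
  refine ⟨(Cup * 2^N) / (Clow * ρ₀^N),
    div_pos (mul_pos hCup (by positivity)) (mul_pos hClow (pow_pos hρ₀ N)), ?_⟩
  intro x r hr
  obtain ⟨v, hv1, hvlow, hvsign⟩ := hdir x
  set A : EuclideanSpace ℝ (Fin N) → ℝ := fun α => |⟪x, α⟫| + r with hA
  have hApos : ∀ α, 0 < A α := fun α => add_pos_of_nonneg_of_pos (abs_nonneg _) hr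
  set P := ∏ α ∈ R, A α ^ (k α) with hP
  have hPpos : 0 < P := Finset.prod_pos fun α _ => Real.rpow_pos_of_pos (hApos α) _
  set x' := x + (r/2) • v with hx'
  have hinner' : ∀ α, ⟪x', α⟫ = ⟪x, α⟫ + (r/2) * ⟪v, α⟫ := fun α => by
    rw [hx', inner_add_left, real_inner_smul_left]
  have habs' : ∀ α ∈ R, |⟪x, α⟫| + (r/2) * |⟪v, α⟫| ≤ |⟪x', α⟫| := by
    intro α hα
    rw [hinner' α, abs_add_same_sign (by
      have := hvsign α hα
      have h2 : (⟪x, α⟫ : ℝ) * ((r/2) * ⟪v, α⟫) = (r/2) * (⟪x, α⟫ * ⟪v, α⟫) := by ring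
      rw [h2]; positivity)]
    rw [abs_mul, abs_of_pos (by linarith : (0:ℝ) < r/2)]
  -- lower bound for the density on the small ball
  have hlow_ball : ∀ y ∈ Metric.closedBall x' (ρ₀ * r), ∀ α ∈ R, (c₀/4) * A α ≤ |⟪y, α⟫| := by
    intro y hy α hα
    have hdist : ‖x' - y‖ ≤ ρ₀ * r := by
      rw [← dist_eq_norm, dist_comm]
      exact Metric.mem_closedBall.mp hy
    have h1 : |⟪x' - y, α⟫| ≤ (ρ₀ * r) * sq2 := by
      calc |⟪x' - y, α⟫| ≤ ‖x' - y‖ * ‖α‖ := abs_real_inner_le_norm _ _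
        _ ≤ (ρ₀ * r) * sq2 := by
            rw [hRnorm α hα]
            exact mul_le_mul_of_nonneg_right hdist hsq2_pos.le
    have h2 : |⟪x', α⟫| ≤ |⟪y, α⟫| + |⟪x' - y, α⟫| := by
      have he : (⟪x', α⟫ : ℝ) = ⟪y, α⟫ + ⟪x' - y, α⟫ := by
        rw [inner_sub_left]; ring
      rw [he]; exact abs_add_le _ _
    have h3 := habs' α hα
    have h4 : c₀ ≤ |⟪v, α⟫| := hvlow α hα
    have h5 : (ρ₀ * r) * sq2 = (c₀/4) * r := by
      rw [mul_right_comm, hρ₀sq2]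
    have h6 : |⟪x, α⟫| + (r/2) * c₀ ≤ |⟪x', α⟫| := by nlinarith
    rw [hA]
    simp only []
    nlinarith [abs_nonneg (⟪x, α⟫ : ℝ)]
  have hball_sub : Metric.closedBall x' (ρ₀ * r) ⊆ Metric.closedBall x r := by
    intro y hy
    rw [Metric.mem_closedBall] at hy ⊢
    have hxx' : dist x' x = r/2 := by
      rw [dist_eq_norm, hx', add_sub_cancel_left, norm_smul, hv1, mul_one,
        Real.norm_eq_abs, abs_of_pos (by linarith : (0:ℝ) < r/2)]
    calc dist y x ≤ dist y x' + dist x' x := dist_triangle _ _ _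
      _ ≤ ρ₀ * r + r/2 := by rw [hxx']; exact add_le_add hy le_rfl
      _ ≤ r := by nlinarith
  -- upper bound for the density on the big ball
  have hup_ball : ∀ y ∈ Metric.closedBall x (2*r), ∀ α ∈ R, |⟪y, α⟫| ≤ (2*sq2) * A α := by
    intro y hy α hα
    have hdist : ‖y - x‖ ≤ 2*r := by
      rw [← dist_eq_norm]
      exact Metric.mem_closedBall.mp hy
    have h1 : |⟪y - x, α⟫| ≤ (2*r) * sq2 := by
      calc |⟪y - x, α⟫| ≤ ‖y - x‖ * ‖α‖ := abs_real_inner_le_norm _ _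
        _ ≤ (2*r) * sq2 := by
            rw [hRnorm α hα]
            exact mul_le_mul_of_nonneg_right hdist hsq2_pos.le
    have h2 : |⟪y, α⟫| ≤ |⟪x, α⟫| + |⟪y - x, α⟫| := by
      have he : (⟪y, α⟫ : ℝ) = ⟪x, α⟫ + ⟪y - x, α⟫ := by
        rw [inner_sub_left]; ring
      rw [he]; exact abs_add_le _ _
    rw [hA]
    simp only []
    nlinarith [abs_nonneg (⟪x, α⟫ : ℝ)]
  -- pointwise density bounds
  have hwup : ∀ y ∈ Metric.closedBall x (2*r), wDensity R k y ≤ Cup * P := by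
    intro y hy
    rw [wDensity]
    calc ∏ α ∈ R, |⟪y, α⟫| ^ k α ≤ ∏ α ∈ R, ((2*sq2) * A α) ^ k α := by
          refine Finset.prod_le_prod (fun α _ => Real.rpow_nonneg (abs_nonneg _) _) ?_
          intro α hα
          exact Real.rpow_le_rpow (abs_nonneg _) (hup_ball y hy α hα) (hk α hα).le
      _ = Cup * P := by
          rw [hCupdef, hP, ← Finset.prod_mul_distrib]
          exact Finset.prod_congr rfl fun α _ =>
            Real.mul_rpow (by positivity) (hApos α).le
  have hwlow : ∀ y ∈ Metric.closedBall x' (ρ₀ * r), Clow * P ≤ wDensity R k y := by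
    intro y hy
    rw [wDensity]
    calc Clow * P = ∏ α ∈ R, ((c₀/4) * A α) ^ k α := by
          rw [hClowdef, hP, ← Finset.prod_mul_distrib]
          exact (Finset.prod_congr rfl fun α _ =>
            Real.mul_rpow (by positivity) (hApos α).le).symm
      _ ≤ ∏ α ∈ R, |⟪y, α⟫| ^ k α := by
          refine Finset.prod_le_prod (fun α _ => Real.rpow_nonneg (by positivity) _) ?_
          intro α hα
          exact Real.rpow_le_rpow (by positivity) (hlow_ball y hy α hα) (hk α hα).le
  -- volumes
  set V := volume (Metric.ball (0 : EuclideanSpace ℝ (Fin N)) 1) with hVdef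
  have hvol2 : volume (Metric.closedBall x (2*r)) = ENNReal.ofReal ((2*r)^N) * V := by
    rw [hVdef, Measure.addHaar_closedBall volume x (by positivity : (0:ℝ) ≤ 2*r),
      finrank_euclideanSpace_fin]
  have hvol1 : volume (Metric.closedBall x' (ρ₀*r)) = ENNReal.ofReal ((ρ₀*r)^N) * V := by
    rw [hVdef, Measure.addHaar_closedBall volume x' (by positivity : (0:ℝ) ≤ ρ₀*r),
      finrank_euclideanSpace_fin]
  -- key real inequality (in fact equality)
  have hkey : Cup * P * (2*r)^N
      = ((Cup * 2^N) / (Clow * ρ₀^N)) * ((Clow * P) * (ρ₀*r)^N) := by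
    rw [mul_pow, mul_pow]
    field_simp
  calc wMeasure R k (Metric.closedBall x (2*r))
      = ∫⁻ y in Metric.closedBall x (2*r), ENNReal.ofReal (wDensity R k y) :=
        withDensity_apply _ measurableSet_closedBall
    _ ≤ ∫⁻ _ in Metric.closedBall x (2*r), ENNReal.ofReal (Cup * P) :=
        setLIntegral_mono measurable_const fun y hy =>
          ENNReal.ofReal_le_ofReal (hwup y hy)
    _ = ENNReal.ofReal (Cup * P) * volume (Metric.closedBall x (2*r)) :=
        setLIntegral_const _ _
    _ ≤ ENNReal.ofReal ((Cup * 2^N) / (Clow * ρ₀^N)) *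
        (ENNReal.ofReal (Clow * P) * volume (Metric.closedBall x' (ρ₀*r))) := by
        rw [hvol2, hvol1]
        have hL : ENNReal.ofReal (Cup * P) * (ENNReal.ofReal ((2*r)^N) * V)
            = ENNReal.ofReal (Cup * P * (2*r)^N) * V := by
          rw [ENNReal.ofReal_mul (by positivity : (0:ℝ) ≤ Cup * P), mul_assoc]
        have hRr : ENNReal.ofReal ((Cup * 2^N) / (Clow * ρ₀^N)) *
            (ENNReal.ofReal (Clow * P) * (ENNReal.ofReal ((ρ₀*r)^N) * V))
            = ENNReal.ofReal ((Cup * 2^N) / (Clow * ρ₀^N) * ((Clow * P) * (ρ₀*r)^N)) * V := by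
          rw [ENNReal.ofReal_mul (by positivity : (0:ℝ) ≤ (Cup*2^N)/(Clow*ρ₀^N)),
            ENNReal.ofReal_mul (by positivity : (0:ℝ) ≤ Clow * P)]
          ring
        rw [hL, hRr, ← hkey]
    _ ≤ ENNReal.ofReal ((Cup * 2^N) / (Clow * ρ₀^N)) *
        wMeasure R k (Metric.closedBall x r) := by
        refine mul_le_mul_of_nonneg_left ?_ zero_le'
        calc ENNReal.ofReal (Clow * P) * volume (Metric.closedBall x' (ρ₀*r))
            = ∫⁻ _ in Metric.closedBall x' (ρ₀*r), ENNReal.ofReal (Clow * P) :=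
              (setLIntegral_const _ _).symm
          _ ≤ ∫⁻ y in Metric.closedBall x' (ρ₀*r), ENNReal.ofReal (wDensity R k y) :=
              setLIntegral_mono hmeas fun y hy =>
                ENNReal.ofReal_le_ofReal (hwlow y hy)
          _ ≤ ∫⁻ y in Metric.closedBall x r, ENNReal.ofReal (wDensity R k y) :=
              lintegral_mono_set hball_sub
          _ = wMeasure R k (Metric.closedBall x r) :=
              (withDensity_apply _ measurableSet_closedBall).symm


end
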